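/- Define c₀ : ℤ⁺ → {0,1} × {0,1} by c₀(x) = (μ(x) mod 2, λ(x) mod 2). Then c₀ is computable, and for every infinite set A ⊆ ℤ⁺ that does not have weak apartness, FS^{≤2}(A) is not monochromatic under c₀. -/

import Mathlib

/-- `mu x = ⌊log₂ x⌋`, the exponent of the highest power of 2 in the binary expansion of `x`. -/
def mu (x : ℕ) : ℕ := Nat.log 2 x

/-- `lam x` is the 2-adic valuation of `x`, the exponent of the lowest power of 2
in the binary expansion of `x`. -/
def lam (x : ℕ) : ℕ := padicValNat 2 x

/-- `Bset n = B^n = {x ∈ ℤ⁺ : μ(x) = n}`. -/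
def Bset (n : ℕ) : Set ℕ := {x | 0 < x ∧ mu x = n}

/-- A set `A ⊆ ℤ⁺` has weak apartness if every `A ∩ B^m` has at most one element and
for every `l` there are at most two elements `x ∈ A` with `λ(x) = l`. -/
def WeakApart (A : Set ℕ) : Prop :=
  (∀ m, (A ∩ Bset m).Subsingleton) ∧
  (∀ l, ∀ x ∈ A, ∀ y ∈ A, ∀ z ∈ A,
    lam x = l → lam y = l → lam z = l → x = y ∨ x = z ∨ y = z)

/-- `FS A`: all finite sums of distinct elements of `A`. -/
def FS (A : Set ℕ) : Set ℕ :=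
  {n | ∃ F : Finset ℕ, ↑F ⊆ A ∧ F.Nonempty ∧ F.sum id = n}

/-- `FSle k A = FS^{≤k}(A)`: sums of at most `k` distinct elements of `A`. -/
def FSle (k : ℕ) (A : Set ℕ) : Set ℕ :=
  {n | ∃ F : Finset ℕ, ↑F ⊆ A ∧ F.Nonempty ∧ F.card ≤ k ∧ F.sum id = n}

/-- `A` is `Π⁰₃`: `x ∈ A ↔ ∀ y ∃ z ∀ w, R x y z w` for a computable relation `R`. -/
def Pi03 (A : Set ℕ) : Prop :=
  ∃ R : ℕ → ℕ → ℕ → ℕ → Bool,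
    Computable (fun p : ℕ × ℕ × ℕ × ℕ => R p.1 p.2.1 p.2.2.1 p.2.2.2) ∧
    ∀ x, x ∈ A ↔ ∀ y, ∃ z, ∀ w, R x y z w = true

/-- `A` is `Σ⁰₃`: `x ∈ A ↔ ∃ y ∀ z ∃ w, R x y z w` for a computable relation `R`. -/
def Sigma03 (A : Set ℕ) : Prop :=
  ∃ R : ℕ → ℕ → ℕ → ℕ → Bool,
    Computable (fun p : ℕ × ℕ × ℕ × ℕ => R p.1 p.2.1 p.2.2.1 p.2.2.2) ∧
    ∀ x, x ∈ A ↔ ∃ y, ∀ z, ∃ w, R x y z w = true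

/-- `A` is `Δ⁰₃` iff it is both `Σ⁰₃` and `Π⁰₃`. -/
def Delta03 (A : Set ℕ) : Prop := Sigma03 A ∧ Pi03 A

/-- The coloring $c_0(x) = (\mu(x) \bmod 2, \lambda(x) \bmod 2)$. -/
def c₀ (x : ℕ) : ℕ × ℕ := (mu x % 2, lam x % 2)

/- ## Auxiliary lemmas -/

lemma primrec_pow2 : Primrec₂ ((· ^ ·) : ℕ → ℕ → ℕ) :=
  Primrec₂.unpaired'.mp Nat.Primrec.pow

lemma mu_eq_findGreatest (x : ℕ) : mu x = Nat.findGreatest (fun m => 2 ^ m ≤ x) x := by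
  rcases Nat.eq_zero_or_pos x with rfl | hx
  · simp [mu]
  symm
  rw [Nat.findGreatest_eq_iff]
  refine ⟨Nat.log_le_self 2 x, fun _ => Nat.pow_log_le_self 2 hx.ne', fun n hn hnx h2 => ?_⟩
  have h1 := Nat.lt_pow_succ_log_self (b := 2) (by norm_num) x
  have h3 : x < 2 ^ n := lt_of_lt_of_le h1 (Nat.pow_le_pow_right (by norm_num) hn)
  exact absurd h2 (by omega)

lemma lam_eq_findGreatest (x : ℕ) :
    lam x = Nat.findGreatest (fun k => x % 2 ^ k = 0) x := by
  rcases Nat.eq_zero_or_pos x with rfl | hx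
  · simp [lam]
  have hdvd : 2 ^ lam x ∣ x := pow_padicValNat_dvd
  have hnot : ¬ 2 ^ (lam x + 1) ∣ x := pow_succ_padicValNat_not_dvd hx.ne'
  have hle : lam x ≤ x := by
    have h1 : 2 ^ lam x ≤ x := Nat.le_of_dvd hx hdvd
    have h2 := Nat.lt_two_pow_self (n := lam x)
    omega
  symm
  rw [Nat.findGreatest_eq_iff]
  refine ⟨hle, fun _ => ?_, fun n hn hnx hmod => ?_⟩
  · exact Nat.mod_eq_zero_of_dvd hdvd
  · exact hnot (dvd_trans (pow_dvd_pow 2 (by omega)) (Nat.dvd_of_mod_eq_zero hmod))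

lemma lam_eq_of_dvd (x k : ℕ) (hx : x ≠ 0) (h1 : 2 ^ k ∣ x) (h2 : ¬ 2 ^ (k + 1) ∣ x) :
    lam x = k := by
  haveI := Fact.mk Nat.prime_two
  have hge : k ≤ padicValNat 2 x := (padicValNat_dvd_iff_le hx).mp h1
  have hlt : ¬ (k + 1 ≤ padicValNat 2 x) := fun h => h2 ((padicValNat_dvd_iff_le hx).mpr h)
  unfold lam; omega

lemma lam_pow_dvd {x l : ℕ} (hlx : lam x = l) : 2 ^ l ∣ x := hlx ▸ pow_padicValNat_dvd

lemma lam_pow_succ_not_dvd {x l : ℕ} (hx : 0 < x) (hlx : lam x = l) : ¬ 2 ^ (l + 1) ∣ x := by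
  rw [← hlx]; exact pow_succ_padicValNat_not_dvd hx.ne'

lemma single_mem_FSle {A : Set ℕ} {x : ℕ} (hx : x ∈ A) : x ∈ FSle 2 A :=
  ⟨{x}, by simpa using hx, ⟨x, by simp⟩, by simp, by simp⟩

lemma pair_mem_FSle {A : Set ℕ} {x y : ℕ} (hx : x ∈ A) (hy : y ∈ A) (hxy : x ≠ y) :
    x + y ∈ FSle 2 A := by
  refine ⟨{x, y}, ?_, ⟨x, by simp⟩, ?_, by simp [Finset.sum_pair hxy]⟩
  · intro a ha
    simp only [Finset.coe_insert, Finset.coe_singleton, Set.mem_insert_iff,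
      Set.mem_singleton_iff] at ha
    rcases ha with rfl | rfl <;> assumption
  · exact le_trans (Finset.card_insert_le _ _) (by simp)

lemma mu_add {x y m : ℕ} (hx : 0 < x) (hy : 0 < y) (hmx : mu x = m) (hmy : mu y = m) :
    mu (x + y) = m + 1 := by
  have h1 : 2 ^ m ≤ x := hmx ▸ Nat.pow_log_le_self 2 hx.ne'
  have h2 : x < 2 ^ (m + 1) := hmx ▸ Nat.lt_pow_succ_log_self (by norm_num) x
  have h3 : 2 ^ m ≤ y := hmy ▸ Nat.pow_log_le_self 2 hy.ne'
  have h4 : y < 2 ^ (m + 1) := hmy ▸ Nat.lt_pow_succ_log_self (by norm_num) y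
  have e1 : 2 ^ (m + 1) = 2 * 2 ^ m := by ring
  have e2 : 2 ^ (m + 2) = 2 * 2 ^ (m + 1) := by ring
  exact Nat.log_eq_of_pow_le_of_lt_pow (by omega) (by omega)

lemma lam_add {x y l : ℕ} (hx : 0 < x) (hy : 0 < y)
    (hlx : lam x = l) (hly : lam y = l) (hmod : x % 2 ^ (l + 2) = y % 2 ^ (l + 2)) :
    lam (x + y) = l + 1 := by
  have hx1 : 2 ^ l ∣ x := lam_pow_dvd hlx
  have hx2 : ¬ 2 ^ (l + 1) ∣ x := lam_pow_succ_not_dvd hx hlx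
  set P := 2 ^ (l + 2) with hP
  have hsum : x + y = P * (x / P) + P * (y / P) + 2 * (x % P) := by
    have d1 := Nat.div_add_mod x P
    have d2 := Nat.div_add_mod y P
    omega
  have hPd : 2 ^ (l + 1) ∣ P := pow_dvd_pow 2 (by omega)
  have hPd' : 2 ^ l ∣ P := pow_dvd_pow 2 (by omega)
  have hrl : 2 ^ l ∣ x % P := (Nat.dvd_mod_iff hPd').mpr hx1
  apply lam_eq_of_dvd _ _ (by omega)
  · rw [hsum]
    refine Nat.dvd_add (Nat.dvd_add (Dvd.dvd.mul_right hPd _) (Dvd.dvd.mul_right hPd _)) ?_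
    obtain ⟨c, hc⟩ := hrl
    exact ⟨c, by rw [hc, pow_succ]; ring⟩
  · intro hdvd
    rw [hsum] at hdvd
    have hPP : 2 ^ (l + 1 + 1) ∣ P := by rw [hP]
    have h2r : 2 ^ (l + 1 + 1) ∣ 2 * (x % P) :=
      (Nat.dvd_add_right (Nat.dvd_add (Dvd.dvd.mul_right hPP _) (Dvd.dvd.mul_right hPP _))).mp hdvd
    have hr1 : 2 ^ (l + 1) ∣ x % P := by
      obtain ⟨c, hc⟩ := h2r
      have e : 2 ^ (l + 1 + 1) * c = 2 * (2 ^ (l + 1) * c) := by ring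
      exact ⟨c, by omega⟩
    exact hx2 ((Nat.dvd_mod_iff hPd).mp hr1)

lemma residue_lam {x l : ℕ} (hx : 0 < x) (hlx : lam x = l) :
    x % 2 ^ (l + 2) = 2 ^ l ∨ x % 2 ^ (l + 2) = 3 * 2 ^ l := by
  have hx1 : 2 ^ l ∣ x := lam_pow_dvd hlx
  have hx2 : ¬ 2 ^ (l + 1) ∣ x := lam_pow_succ_not_dvd hx hlx
  have hPd : 2 ^ (l + 1) ∣ 2 ^ (l + 2) := pow_dvd_pow 2 (by omega)
  have hPd' : 2 ^ l ∣ 2 ^ (l + 2) := pow_dvd_pow 2 (by omega)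
  have hrl : 2 ^ l ∣ x % 2 ^ (l + 2) := (Nat.dvd_mod_iff hPd').mpr hx1
  have hr2 : ¬ 2 ^ (l + 1) ∣ x % 2 ^ (l + 2) := fun h => hx2 ((Nat.dvd_mod_iff hPd).mp h)
  have hrlt : x % 2 ^ (l + 2) < 2 ^ (l + 2) := Nat.mod_lt _ (by positivity)
  obtain ⟨c, hc⟩ := hrl
  have hc4 : c < 4 := by
    have e : 2 ^ (l + 2) = 2 ^ l * 4 := by ring
    rw [hc, e] at hrlt
    exact lt_of_mul_lt_mul_left hrlt (by positivity)
  have hodd : ¬ 2 ∣ c := by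
    rintro ⟨d, rfl⟩
    exact hr2 ⟨d, by rw [hc, pow_succ]; ring⟩
  have : c = 1 ∨ c = 3 := by omega
  rcases this with rfl | rfl
  · left; rw [hc]; ring
  · right; rw [hc]; ring

lemma lam_pair_witness {A : Set ℕ} {x y l : ℕ} (hxA : x ∈ A) (hyA : y ∈ A) (hxy : x ≠ y)
    (hx : 0 < x) (hy : 0 < y) (hlx : lam x = l) (hly : lam y = l)
    (hmod : x % 2 ^ (l + 2) = y % 2 ^ (l + 2)) :
    ∃ u ∈ FSle 2 A, ∃ v ∈ FSle 2 A, c₀ u ≠ c₀ v := by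
  refine ⟨x, single_mem_FSle hxA, x + y, pair_mem_FSle hxA hyA hxy, ?_⟩
  have h := lam_add hx hy hlx hly hmod
  intro hc
  have := congrArg Prod.snd hc
  simp only [c₀, h, hlx] at this
  omega

theorem stmt13 :
    Computable c₀ ∧
      ∀ A : Set ℕ, (∀ x ∈ A, 0 < x) → A.Infinite → ¬WeakApart A →
        ∃ u ∈ FSle 2 A, ∃ v ∈ FSle 2 A, c₀ u ≠ c₀ v := by
  constructor
  · -- computability
    have hmu : Primrec mu := by
      have h : Primrec fun x => Nat.findGreatest (fun m => 2 ^ m ≤ x) x :=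
        Primrec.nat_findGreatest Primrec.id
          (PrimrecRel.comp Primrec.nat_le
            (Primrec₂.comp primrec_pow2 (Primrec.const 2) Primrec.snd) Primrec.fst)
      exact h.of_eq fun x => (mu_eq_findGreatest x).symm
    have hlam : Primrec lam := by
      have h : Primrec fun x => Nat.findGreatest (fun k => x % 2 ^ k = 0) x :=
        Primrec.nat_findGreatest Primrec.id
          (PrimrecRel.comp Primrec.eq
            (Primrec₂.comp Primrec.nat_mod Primrec.fst
              (Primrec₂.comp primrec_pow2 (Primrec.const 2) Primrec.snd))
            (Primrec.const 0))
      exact h.of_eq fun x => (lam_eq_findGreatest x).symm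
    have : Primrec c₀ :=
      Primrec.pair (Primrec₂.comp Primrec.nat_mod hmu (Primrec.const 2))
        (Primrec₂.comp Primrec.nat_mod hlam (Primrec.const 2))
    exact this.to_comp
  · intro A hpos _ hna
    rcases not_and_or.mp hna with h | h
    · push_neg at h
      obtain ⟨m, hm⟩ := h
      obtain ⟨x, hxs, y, hys, hxy⟩ := hm
      obtain ⟨hxA, hx0, hmux⟩ := hxs
      obtain ⟨hyA, hy0, hmuy⟩ := hys
      refine ⟨x, single_mem_FSle hxA, x + y, pair_mem_FSle hxA hyA hxy, ?_⟩
      have h := mu_add hx0 hy0 hmux hmuy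
      intro hc
      have := congrArg Prod.fst hc
      simp only [c₀, h, hmux] at this
      omega
    · push_neg at h
      obtain ⟨l, x, hxA, y, hyA, z, hzA, hlx, hly, hlz, hxy, hxz, hyz⟩ := h
      have hx0 := hpos x hxA
      have hy0 := hpos y hyA
      have hz0 := hpos z hzA
      have h2l : (2 : ℕ) ^ l ≠ 3 * 2 ^ l := by
        have : (0 : ℕ) < 2 ^ l := by positivity
        omega
      rcases residue_lam hx0 hlx with hrx | hrx <;>
        rcases residue_lam hy0 hly with hry | hry <;>
          rcases residue_lam hz0 hlz with hrz | hrz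
      · exact lam_pair_witness hxA hyA hxy hx0 hy0 hlx hly (hrx.trans hry.symm)
      · exact lam_pair_witness hxA hyA hxy hx0 hy0 hlx hly (hrx.trans hry.symm)
      · exact lam_pair_witness hxA hzA hxz hx0 hz0 hlx hlz (hrx.trans hrz.symm)
      · exact lam_pair_witness hyA hzA hyz hy0 hz0 hly hlz (hry.trans hrz.symm)
      · exact lam_pair_witness hyA hzA hyz hy0 hz0 hly hlz (hry.trans hrz.symm)
      · exact lam_pair_witness hxA hzA hxz hx0 hz0 hlx hlz (hrx.trans hrz.symm)
      · exact lam_pair_witness hxA hyA hxy hx0 hy0 hlx hly (hrx.trans hry.symm)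
      · exact lam_pair_witness hxA hyA hxy hx0 hy0 hlx hly (hrx.trans hry.symm)
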